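/- Let M be a conservative algebra with associated multiplication *. Then the operator algebra identity [L_b,[L_a,L_x]] − [L_b,L_{ax}] − [L_a,L_{bx}] + L_{a(bx)} + [L_{a*b},L_x] − L_{(a*b)x} = 0 holds for all a, b, x ∈ M; consequently the span U_0(M) of all L_a and [L_a,L_b], a,b ∈ M, is a Lie subalgebra of gl(M). -/

import Mathlib

/-- `[φ,B](x,y) = φ(B(x,y)) − B(φ(x),y) − B(x,φ(y))`. -/
def opBr {V : Type*} [AddCommGroup V] (φ : V → V) (B : V → V → V) : V → V → V :=
  fun x y => φ (B x y) - B (φ x) y - B x (φ y)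

/-- For a conservative algebra `M` with associated multiplication `*`, the operator
identity `[L_b,[L_a,L_x]] − [L_b,L_{ax}] − [L_a,L_{bx}] + L_{a(bx)} + [L_{a*b},L_x]
− L_{(a*b)x} = 0` holds, and consequently the span of all `L_a` and `[L_a,L_b]`
is a Lie subalgebra of `gl(M)`. -/
theorem stmt8 {F A : Type*} [Field F] [NonUnitalNonAssocRing A] [Module F A]
    [SMulCommClass F A A] [IsScalarTower F A A]
    (star : A → A → A)
    (hcons : ∀ a b : A,
      opBr (fun x : A => b * x) (opBr (fun x : A => a * x) (fun x y : A => x * y))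
        = - opBr (fun x : A => star a b * x) (fun x y : A => x * y)) :
    (∀ a b x : A,
      ⁅(LinearMap.mulLeft F b : Module.End F A),
          ⁅(LinearMap.mulLeft F a : Module.End F A), LinearMap.mulLeft F x⁆⁆
        - ⁅(LinearMap.mulLeft F b : Module.End F A), LinearMap.mulLeft F (a * x)⁆
        - ⁅(LinearMap.mulLeft F a : Module.End F A), LinearMap.mulLeft F (b * x)⁆
        + LinearMap.mulLeft F (a * (b * x))
        + ⁅(LinearMap.mulLeft F (star a b) : Module.End F A), LinearMap.mulLeft F x⁆
        - LinearMap.mulLeft F (star a b * x) = 0) ∧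
    (∀ f g : Module.End F A,
      f ∈ Submodule.span F {h : Module.End F A |
            (∃ a : A, h = LinearMap.mulLeft F a) ∨
            (∃ a b : A, h = ⁅(LinearMap.mulLeft F a : Module.End F A),
                              LinearMap.mulLeft F b⁆)} →
      g ∈ Submodule.span F {h : Module.End F A |
            (∃ a : A, h = LinearMap.mulLeft F a) ∨
            (∃ a b : A, h = ⁅(LinearMap.mulLeft F a : Module.End F A),
                              LinearMap.mulLeft F b⁆)} →
      ⁅f, g⁆ ∈ Submodule.span F {h : Module.End F A |
            (∃ a : A, h = LinearMap.mulLeft F a) ∨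
            (∃ a b : A, h = ⁅(LinearMap.mulLeft F a : Module.End F A),
                              LinearMap.mulLeft F b⁆)}) := by
  have part1 : ∀ a b x : A,
      ⁅(LinearMap.mulLeft F b : Module.End F A),
          ⁅(LinearMap.mulLeft F a : Module.End F A), LinearMap.mulLeft F x⁆⁆
        - ⁅(LinearMap.mulLeft F b : Module.End F A), LinearMap.mulLeft F (a * x)⁆
        - ⁅(LinearMap.mulLeft F a : Module.End F A), LinearMap.mulLeft F (b * x)⁆
        + LinearMap.mulLeft F (a * (b * x))
        + ⁅(LinearMap.mulLeft F (star a b) : Module.End F A), LinearMap.mulLeft F x⁆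
        - LinearMap.mulLeft F (star a b * x) = 0 := by
    intro a b x
    ext y
    have h := congrFun (congrFun (hcons a b) x) y
    simp only [opBr, Pi.neg_apply] at h
    simp only [Ring.lie_def, LinearMap.sub_apply, LinearMap.add_apply, Module.End.mul_apply,
      LinearMap.mulLeft_apply, LinearMap.zero_apply]
    calc b * (a * (x * y) - x * (a * y)) - (a * (x * (b * y)) - x * (a * (b * y)))
          - (b * (a * x * y) - a * x * (b * y)) - (a * (b * x * y) - b * x * (a * y))
          + a * (b * x) * y + (star a b * (x * y) - x * (star a b * y)) - star a b * x * y
        = (b * (a * (x * y) - a * x * y - x * (a * y))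
            - (a * (b * x * y) - a * (b * x) * y - b * x * (a * y))
            - (a * (x * (b * y)) - a * x * (b * y) - x * (a * (b * y))))
          - -(star a b * (x * y) - star a b * x * y - x * (star a b * y)) := by
          simp only [mul_sub]; abel
      _ = 0 := by rw [h]; abel
  refine ⟨part1, ?_⟩
  set S : Set (Module.End F A) := {h : Module.End F A |
            (∃ a : A, h = LinearMap.mulLeft F a) ∨
            (∃ a b : A, h = ⁅(LinearMap.mulLeft F a : Module.End F A),
                              LinearMap.mulLeft F b⁆)} with hS
  have hgen1 : ∀ a : A, LinearMap.mulLeft F a ∈ Submodule.span F S := fun a =>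
    Submodule.subset_span (Or.inl ⟨a, rfl⟩)
  have hgen2 : ∀ a b : A,
      ⁅(LinearMap.mulLeft F a : Module.End F A), LinearMap.mulLeft F b⁆
        ∈ Submodule.span F S := fun a b => Submodule.subset_span (Or.inr ⟨a, b, rfl⟩)
  -- bracketing a double bracket with an L is in the span, by the identity
  have hdouble : ∀ a b x : A,
      ⁅(LinearMap.mulLeft F b : Module.End F A),
          ⁅(LinearMap.mulLeft F a : Module.End F A), LinearMap.mulLeft F x⁆⁆
        ∈ Submodule.span F S := by
    intro a b x
    have h := part1 a b x
    have : ⁅(LinearMap.mulLeft F b : Module.End F A),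
          ⁅(LinearMap.mulLeft F a : Module.End F A), LinearMap.mulLeft F x⁆⁆
        = ⁅(LinearMap.mulLeft F b : Module.End F A), LinearMap.mulLeft F (a * x)⁆
          + ⁅(LinearMap.mulLeft F a : Module.End F A), LinearMap.mulLeft F (b * x)⁆
          - LinearMap.mulLeft F (a * (b * x))
          - ⁅(LinearMap.mulLeft F (star a b) : Module.End F A), LinearMap.mulLeft F x⁆
          + LinearMap.mulLeft F (star a b * x) := by
      have := sub_eq_zero.mpr h.symm
      linear_combination (norm := abel) h
    rw [this]
    exact Submodule.add_mem _ (Submodule.sub_mem _ (Submodule.sub_mem _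
      (Submodule.add_mem _ (hgen2 b (a*x)) (hgen2 a (b*x))) (hgen1 (a*(b*x))))
      (hgen2 (star a b) x)) (hgen1 (star a b * x))
  -- Lemma A : ⁅L_a, g⁆ ∈ span for g ∈ span
  have lemA : ∀ a : A, ∀ g ∈ Submodule.span F S,
      ⁅(LinearMap.mulLeft F a : Module.End F A), g⁆ ∈ Submodule.span F S := by
    intro a g hg
    induction hg using Submodule.span_induction with
    | mem h hh =>
      rcases hh with ⟨c, rfl⟩ | ⟨c, d, rfl⟩
      · exact hgen2 a c
      · exact hdouble c a d
    | zero => simp only [Ring.lie_def, mul_zero, zero_mul, sub_zero]; exact Submodule.zero_mem _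
    | add u v _ _ hu hv =>
      convert Submodule.add_mem _ hu hv using 1; simp only [Ring.lie_def, mul_add, add_mul]; abel
    | smul t u _ hu =>
      convert Submodule.smul_mem _ t hu using 1
      simp only [Ring.lie_def, mul_smul_comm, smul_mul_assoc, smul_sub]
  intro f g hf hg
  induction hf using Submodule.span_induction with
  | mem h hh =>
    rcases hh with ⟨c, rfl⟩ | ⟨c, d, rfl⟩
    · exact lemA c g hg
    · convert Submodule.sub_mem _ (lemA c _ (lemA d g hg)) (lemA d _ (lemA c g hg)) using 1
      simp only [Ring.lie_def, mul_sub, sub_mul, mul_assoc]; abel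
  | zero => simp only [Ring.lie_def, mul_zero, zero_mul, sub_zero]; exact Submodule.zero_mem _
  | add u v _ _ hu hv =>
    convert Submodule.add_mem _ hu hv using 1; simp only [Ring.lie_def, mul_add, add_mul]; abel
  | smul t u _ hu =>
    convert Submodule.smul_mem _ t hu using 1
    simp only [Ring.lie_def, mul_smul_comm, smul_mul_assoc, smul_sub]
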